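/- Let w = (C₂, C₁) be a weight structure on a triangulated category C (C₂ = C_{w≤0}, C₁ = C_{w≥0}). Then the heart C_{w=0} = C₁ ∩ C₂ is zero if and only if C₁[1] = C₁. -/

import Mathlib

open CategoryTheory CategoryTheory.Limits CategoryTheory.Pretriangulated ZeroObject

universe w' v u

variable (C : Type u) [Category.{v} C] [HasZeroObject C] [HasShift C ℤ]
  [Preadditive C] [∀ n : ℤ, (shiftFunctor C n).Additive] [Pretriangulated C]

/-- A t-structure `t = (C_{t≤0}, C_{t≥0})` on a triangulated category, in the homological
convention of the paper.  `le` is the class `C_{t≤0}` and `ge` is the class `C_{t≥0}`.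
The condition `C_{t≤0} ⊆ C_{t≤0}[1]` is encoded as `le X → le (X⟦-1⟧)` (the classes being
closed under isomorphism), and `C_{t≥0}[1] ⊆ C_{t≥0}` as `ge X → ge (X⟦1⟧)`.
The class `C_{t≤i} = C_{t≤0}[i]` is `fun X => le (X⟦-i⟧)` and similarly for `C_{t≥i}`. -/
structure PaperTStructure where
  /-- the class `C_{t≤0}` -/
  le : C → Prop
  /-- the class `C_{t≥0}` -/
  ge : C → Prop
  le_iso : ∀ {X Y : C}, (X ≅ Y) → le X → le Y
  ge_iso : ∀ {X Y : C}, (X ≅ Y) → ge X → ge Y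
  le_shift : ∀ X : C, le X → le (X⟦(-1 : ℤ)⟧)
  ge_shift : ∀ X : C, ge X → ge (X⟦(1 : ℤ)⟧)
  /-- `C_{t≥0}[1] ⊥ C_{t≤0}` -/
  orth : ∀ (X Y : C), ge X → le Y → ∀ f : X⟦(1 : ℤ)⟧ ⟶ Y, f = 0
  /-- every object `M` admits a `t`-decomposition `L → M → R → L[1]` with `L ∈ C_{t≥0}`,
  `R ∈ C_{t≤0}[-1]` (i.e. `R⟦1⟧ ∈ C_{t≤0}`) -/
  decomp : ∀ M : C, ∃ (L R : C) (f : L ⟶ M) (g : M ⟶ R) (h : R ⟶ L⟦(1 : ℤ)⟧),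
    (Triangle.mk f g h ∈ distTriang C) ∧ ge L ∧ le (R⟦(1 : ℤ)⟧)

/-- A weight structure `w = (C_{w≤0}, C_{w≥0})` on a triangulated category, in the homological
convention of the paper.  `le` is the class `C_{w≤0}` and `ge` is the class `C_{w≥0}`;
both are retraction-closed.  `C_{w≤i} = C_{w≤0}[i]` is `fun X => le (X⟦-i⟧)`, similarly `ge`. -/
structure PaperWeightStructure where
  /-- the class `C_{w≤0}` -/
  le : C → Prop
  /-- the class `C_{w≥0}` -/
  ge : C → Prop
  le_retract : ∀ (X Y : C), le Y → (∃ (i : X ⟶ Y) (r : Y ⟶ X), i ≫ r = 𝟙 X) → le X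
  ge_retract : ∀ (X Y : C), ge Y → (∃ (i : X ⟶ Y) (r : Y ⟶ X), i ≫ r = 𝟙 X) → ge X
  le_shift : ∀ X : C, le X → le (X⟦(-1 : ℤ)⟧)
  ge_shift : ∀ X : C, ge X → ge (X⟦(1 : ℤ)⟧)
  /-- `C_{w≤0} ⊥ C_{w≥0}[1]` -/
  orth : ∀ (X Y : C), le X → ge Y → ∀ f : X ⟶ Y⟦(1 : ℤ)⟧, f = 0
  /-- every object `M` admits a weight decomposition `L → M → R → L[1]` with `L ∈ C_{w≤0}`,
  `R ∈ C_{w≥0}[1]` (i.e. `R⟦-1⟧ ∈ C_{w≥0}`) -/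
  decomp : ∀ M : C, ∃ (L R : C) (f : L ⟶ M) (g : M ⟶ R) (h : R ⟶ L⟦(1 : ℤ)⟧),
    (Triangle.mk f g h ∈ distTriang C) ∧ le L ∧ ge (R⟦(-1 : ℤ)⟧)

/-- A class of objects is extension-closed if it contains `0` and for every distinguished
triangle `X → Y → Z → X[1]` with `X, Z` in the class, `Y` lies in the class. -/
def ExtClosed (P : C → Prop) : Prop :=
  P (0 : C) ∧ ∀ T : Triangle C, (T ∈ distTriang C) → P T.obj₁ → P T.obj₃ → P T.obj₂

/-- A class of objects is retraction-closed if it contains all retracts of its elements. -/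
def RetractClosed (P : C → Prop) : Prop :=
  ∀ X Y : C, P Y → (∃ (i : X ⟶ Y) (r : Y ⟶ X), i ≫ r = 𝟙 X) → P X

namespace Stmt8Aux

variable {C}

lemma ge_iso (w : PaperWeightStructure C) {X Y : C} (e : X ≅ Y) (h : w.ge X) : w.ge Y :=
  w.ge_retract Y X h ⟨e.inv, e.hom, e.inv_hom_id⟩

lemma le_iso (w : PaperWeightStructure C) {X Y : C} (e : X ≅ Y) (h : w.le X) : w.le Y :=
  w.le_retract Y X h ⟨e.inv, e.hom, e.inv_hom_id⟩

/-- `Hom(C_{w≤-1}, C_{w≥0}) = 0`. -/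
lemma orth' (w : PaperWeightStructure C) {X Y : C} (hY : w.le (Y⟦(1 : ℤ)⟧)) (hX : w.ge X)
    (f : Y ⟶ X) : f = 0 := by
  have h : f⟦(1 : ℤ)⟧' = 0 := w.orth _ _ hY hX (f⟦(1 : ℤ)⟧')
  exact (shiftFunctor C (1 : ℤ)).map_injective (by rw [h, Functor.map_zero])

/-- If `X` receives no nonzero maps from `C_{w≤-1}`, then `X ∈ C_{w≥0}`. -/
lemma ge_of_orth (w : PaperWeightStructure C) (X : C)
    (hX : ∀ (Y : C) (φ : Y ⟶ X), w.le (Y⟦(1 : ℤ)⟧) → φ = 0) : w.ge X := by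
  obtain ⟨L, R, f, g, h, hT, hL, hR⟩ := w.decomp (X⟦(1 : ℤ)⟧)
  set T' := (CategoryTheory.shiftFunctor (Triangle C) (-1 : ℤ)).obj (Triangle.mk f g h) with hT'
  have hT'd : T' ∈ distTriang C := Triangle.shift_distinguished _ hT (-1)
  have e : (X⟦(1 : ℤ)⟧)⟦(-1 : ℤ)⟧ ≅ X :=
    (shiftFunctorCompIsoId C (1 : ℤ) (-1 : ℤ) (by ring)).app X
  have hL' : w.le ((L⟦(-1 : ℤ)⟧)⟦(1 : ℤ)⟧) :=
    le_iso w ((shiftFunctorCompIsoId C (-1 : ℤ) (1 : ℤ) (by ring)).app L).symm hL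
  have hm1 : T'.mor₁ = 0 := by
    have : T'.mor₁ ≫ e.hom = 0 := hX _ _ hL'
    exact (cancel_mono e.hom).1 (this.trans zero_comp.symm)
  obtain ⟨r, hr⟩ := Triangle.yoneda_exact₂ T' hT'd (𝟙 T'.obj₂) (by rw [hm1, zero_comp])
  have : w.ge T'.obj₂ := w.ge_retract _ _ hR ⟨T'.mor₂, r, hr.symm⟩
  exact ge_iso w e this

/-- `C_{w≥0}` is extension-closed. -/
lemma ge_ext (w : PaperWeightStructure C) (T : Triangle C) (hT : T ∈ distTriang C)
    (h₁ : w.ge T.obj₁) (h₃ : w.ge T.obj₃) : w.ge T.obj₂ := by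
  apply ge_of_orth w
  intro Y φ hY
  have h2 : φ ≫ T.mor₂ = 0 := orth' w hY h₃ _
  obtain ⟨ψ, hψ⟩ := Triangle.coyoneda_exact₂ T hT φ h2
  rw [hψ, orth' w hY h₁ ψ, zero_comp]

end Stmt8Aux

open Stmt8Aux in
/-- the heart `C_{w≤0} ∩ C_{w≥0}` of a weight structure is zero if and only if
`C_{w≥0}[1] = C_{w≥0}`. -/
theorem stmt8 (w : PaperWeightStructure C) :
    (∀ X : C, w.le X → w.ge X → IsZero X) ↔ (∀ X : C, w.ge (X⟦(1 : ℤ)⟧) ↔ w.ge X) := by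
  constructor
  · intro hz X
    refine ⟨fun hX => ?_, w.ge_shift X⟩
    obtain ⟨L, R, f, g, h, hT, hL, hR⟩ := w.decomp (X⟦(1 : ℤ)⟧)
    have hgeL : w.ge L := by
      have := ge_ext w _ (inv_rot_of_distTriang _ hT) hR hX
      exact this
    have hL0 : IsZero L := hz L hL hgeL
    have hf : f = 0 := hL0.eq_of_src f 0
    obtain ⟨r, hr⟩ := Triangle.yoneda_exact₂ _ hT (𝟙 (X⟦(1 : ℤ)⟧))
      (by show f ≫ 𝟙 _ = 0; rw [hf, zero_comp])
    have e : (X⟦(1 : ℤ)⟧)⟦(-1 : ℤ)⟧ ≅ X :=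
      (shiftFunctorCompIsoId C (1 : ℤ) (-1 : ℤ) (by ring)).app X
    refine w.ge_retract X (R⟦(-1 : ℤ)⟧) hR ⟨e.inv ≫ g⟦(-1 : ℤ)⟧', r⟦(-1 : ℤ)⟧' ≫ e.hom, ?_⟩
    have hgr : g ≫ r = 𝟙 (X⟦(1 : ℤ)⟧) := hr.symm
    have : g⟦(-1 : ℤ)⟧' ≫ r⟦(-1 : ℤ)⟧' = 𝟙 _ := by
      refine ((shiftFunctor C (-1 : ℤ)).map_comp g r).symm.trans ?_; rw [hgr]
      exact (shiftFunctor C (-1 : ℤ)).map_id _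
    rw [Category.assoc, reassoc_of% this, e.inv_hom_id]
  · intro hsh X hle hge
    have hge' : w.ge (X⟦(-1 : ℤ)⟧) := by
      rw [← hsh]
      exact ge_iso w ((shiftFunctorCompIsoId C (-1 : ℤ) (1 : ℤ) (by ring)).app X).symm hge
    have e : X ≅ (X⟦(-1 : ℤ)⟧)⟦(1 : ℤ)⟧ :=
      ((shiftFunctorCompIsoId C (-1 : ℤ) (1 : ℤ) (by ring)).app X).symm
    have := w.orth X (X⟦(-1 : ℤ)⟧) hle hge' e.hom
    rw [IsZero.iff_id_eq_zero]
    rw [← cancel_mono e.hom, Category.id_comp, this, zero_comp]
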